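/- In any algebra A in I₂,₀, if (a → b')' = a (i.e., a ⊑ b), then b → a' = a'. -/

import Mathlib

theorem stmt_11 (A : Type*) (i : A → A → A) (z : A)
    (hI : ∀ x y w : A, i (i x y) w = i (i (i (i w z) x) (i (i y w) z)) z)
    (hI0 : i (i z z) z = z)
    (h2 : ∀ x : A, i (i x z) z = x)
    (a b : A) (hab : i (i a (i b z)) z = a) :
    i b (i a z) = i a z := by
  have e1 := h2 b
  have e2 := h2 (i a (i b z))
  have e3 := h2 (i b (i a z))
  have e4 := hI z z (i a (i b z))
  have e5 := hI (i b z) z (i a (i b z))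
  have e6 := hI (i a (i b z)) z z
  grind
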